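/- Key integral estimate in the proof of Theorem 1: Let 1 < p ≤ 2 and let f ∈ L^p_A(ℝ₊) on the Jacobi hypergroup. Then there exists a positive constant c such that for every δ > 0, ∫₀^{1/δ} t |𝓕(f)(t)| dt/|c(t)|² ≤ c ( ω_{A,p}(f)(δ) δ^{−3/p} δ^{−1} + ω_{A,p}(f)(δ) δ^{−2(α+1)/p} δ^{−1} ). -/

import Mathlib

open MeasureTheory Set Filter

/-- The `L^p` norm on `(0,∞)` with respect to the weighted measure `w(x) dx`. -/
noncomputable def wLpNorm (w : ℝ → ℝ) (p : ℝ) (f : ℝ → ℂ) : ℝ :=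
  (∫ x in Set.Ioi (0 : ℝ), ‖f x‖ ^ p * w x) ^ (1 / p)

/-- Membership in `L^p((0,∞), w(x) dx)`. -/
def MemW (w : ℝ → ℝ) (p : ℝ) (f : ℝ → ℂ) : Prop :=
  AEMeasurable f (volume.restrict (Set.Ioi (0 : ℝ))) ∧
    IntegrableOn (fun x => ‖f x‖ ^ p * w x) (Set.Ioi (0 : ℝ))

/-- The Jacobi hypergroup setting: the Chébli–Trimèche hypergroup `(ℝ₊, ∗(A))` with
`A(x) = 2^(2ρ) (sinh x)^(2α+1) (cosh x)^(2β+1)`, `α ≥ β ≥ -1/2`, `α ≠ -1/2`,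
`ρ = α + β + 1`.  Its characters are the Jacobi functions `φ_λ`, satisfying
`|1 - φ_λ(t)| ≥ c₀ min{1, (λt)²}`.  The density `cden = |c(λ)|⁻²` is even, continuous
and comparable to `|λ|^(2α+1)` for `|λ| > k` and to `|λ|²` for `|λ| ≤ k`.  The
generalized Fourier transform `FT` is given on `L¹_A` by
`𝓕(f)(λ) = ∫₀^∞ f(x) φ_λ(x) A(x) dx`; it satisfies `‖𝓕 f‖_∞ ≤ ‖f‖_{A,1}`, the
Hausdorff–Young inequality, the Hardy–Littlewood inequality of Lemma 1 and the
translation identity `𝓕(τ_δ f)(λ) = φ_λ(δ) 𝓕(f)(λ)`, where the generalized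
translations `τ_δ` are `L^p_A`-contractions. -/
structure JacobiHypergroup where
  α : ℝ
  β : ℝ
  ρ : ℝ
  hβα : β ≤ α
  hβ : -(1/2) ≤ β
  hα : α ≠ -(1/2)
  hρ : ρ = α + β + 1
  /-- the weight function `A` of the Jacobi hypergroup -/
  A : ℝ → ℝ
  hA : ∀ x : ℝ, 0 ≤ x →
    A x = (2 : ℝ) ^ (2 * ρ) * Real.sinh x ^ (2 * α + 1) * Real.cosh x ^ (2 * β + 1)
  /-- the Jacobi functions `φ_λ`, the characters of the hypergroup -/
  φ : ℝ → ℝ → ℂ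
  c₀ : ℝ
  hc₀ : 0 < c₀
  hφ_lower : ∀ lam t : ℝ, 0 < t →
    c₀ * min 1 ((lam * t) ^ 2) ≤ ‖1 - φ lam t‖
  /-- the density `|c(λ)|⁻²` of the Plancherel measure -/
  cden : ℝ → ℝ
  hcden_cont : Continuous cden
  hcden_even : ∀ x : ℝ, cden (-x) = cden x
  k : ℝ
  k₁ : ℝ
  k₂ : ℝ
  hk : 0 < k
  hk₁ : 0 < k₁
  hk₂ : 0 < k₂
  hcden_hi : ∀ x : ℝ, k < |x| →
    k₁ * |x| ^ (2 * α + 1) ≤ cden x ∧ cden x ≤ k₂ * |x| ^ (2 * α + 1)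
  hcden_lo : ∀ x : ℝ, |x| ≤ k →
    k₁ * |x| ^ (2 : ℝ) ≤ cden x ∧ cden x ≤ k₂ * |x| ^ (2 : ℝ)
  /-- the generalized Fourier transform -/
  FT : (ℝ → ℂ) → ℝ → ℂ
  hFT_def : ∀ f : ℝ → ℂ, MemW A 1 f → ∀ lam : ℝ,
    FT f lam = ∫ x in Set.Ioi (0 : ℝ), f x * φ lam x * (A x : ℂ)
  hFT_meas : ∀ f : ℝ → ℂ, Measurable (FT f)
  hFT_sub : ∀ f g : ℝ → ℂ, ∀ lam : ℝ,
    FT (fun y => f y - g y) lam = FT f lam - FT g lam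
  /-- `‖𝓕 f‖_∞ ≤ ‖f‖_{A,1}` -/
  hFT_sup : ∀ f : ℝ → ℂ, MemW A 1 f → ∀ lam : ℝ,
    ‖FT f lam‖ ≤ wLpNorm A 1 f
  /-- the Hausdorff–Young inequality `‖𝓕 f‖_{c,p'} ≤ C ‖f‖_{A,p}` -/
  hHY : ∀ p p' : ℝ, 1 < p → p ≤ 2 → 1 / p + 1 / p' = 1 →
    ∃ C > (0 : ℝ), ∀ f : ℝ → ℂ, MemW A p f →
      (∫⁻ lam in Set.Ioi (0 : ℝ),
          ENNReal.ofReal (‖FT f lam‖ ^ p' * cden lam)) ^ (1 / p')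
        ≤ ENNReal.ofReal (C * wLpNorm A p f)
  /-- the Hardy–Littlewood inequality of Lemma 1 (with the piecewise weight
  `g(t) = t³` for `t ≤ k`, `g(t) = t^(2(α+1))` for `t > k`) -/
  hHL : ∀ p : ℝ, 1 < p → p ≤ 2 →
    ∃ C > (0 : ℝ), ∀ f : ℝ → ℂ, MemW A p f →
      ∫⁻ x in Set.Ioi (0 : ℝ),
          ENNReal.ofReal ((if x ≤ k then x ^ (3 : ℝ) else x ^ (2 * (α + 1))) ^ (p - 2) *
            ‖FT f x‖ ^ p * cden x)
        ≤ ENNReal.ofReal (C * wLpNorm A p f ^ p)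
  /-- the generalized translation operators -/
  τ : ℝ → (ℝ → ℂ) → ℝ → ℂ
  hτ_contract : ∀ p : ℝ, 1 ≤ p → ∀ (δ : ℝ) (f : ℝ → ℂ), MemW A p f →
    MemW A p (τ δ f) ∧ wLpNorm A p (τ δ f) ≤ wLpNorm A p f
  hτ_diff : ∀ p : ℝ, 1 ≤ p → ∀ (δ : ℝ) (f : ℝ → ℂ), MemW A p f →
    MemW A p (fun y => τ δ f y - f y)
  /-- the translation identity `𝓕(τ_δ f)(λ) = φ_λ(δ) 𝓕(f)(λ)` -/
  hτ_FT : ∀ p : ℝ, 1 ≤ p → p ≤ 2 → ∀ (δ : ℝ) (f : ℝ → ℂ), MemW A p f →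
    ∀ᵐ lam ∂(volume.restrict (Set.Ioi (0 : ℝ))),
      FT (τ δ f) lam = φ lam δ * FT f lam

/-- The modulus of continuity of first order, `ω_{A,p}(f)(δ) = ‖τ_δ f - f‖_{A,p}`. -/
noncomputable def JacobiHypergroup.omega (S : JacobiHypergroup) (p : ℝ)
    (f : ℝ → ℂ) (δ : ℝ) : ℝ :=
  wLpNorm S.A p (fun y => S.τ δ f y - f y)


/-- Integral of a power over `Ioo 0 a`. -/
lemma lint_rpow_Ioo {a e : ℝ} (ha : 0 < a) (he : -1 < e) :
    ∫⁻ t in Set.Ioo (0:ℝ) a, ENNReal.ofReal (t ^ e) = ENNReal.ofReal (a ^ (e+1) / (e+1)) := by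
  have hint : IntegrableOn (fun t : ℝ => t ^ e) (Set.Ioo 0 a) := by
    have h1 := intervalIntegral.intervalIntegrable_rpow' (a := 0) (b := a) he
    rw [intervalIntegrable_iff, uIoc_of_le ha.le] at h1
    exact h1.mono_set Set.Ioo_subset_Ioc_self
  rw [← ofReal_integral_eq_lintegral_ofReal hint
      (((ae_restrict_mem measurableSet_Ioo).mono fun x hx => Real.rpow_nonneg hx.1.le e))]
  congr 1
  rw [← integral_Ioc_eq_integral_Ioo, ← intervalIntegral.integral_of_le ha.le,
    integral_rpow (Or.inl he), Real.zero_rpow (by linarith : e + 1 ≠ 0)]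
  ring

set_option maxHeartbeats 3000000 in
/-- **Key integral estimate in the proof of Theorem 1**: for `1 < p ≤ 2` and
`f ∈ L^p_A(ℝ₊)` on the Jacobi hypergroup, there exists `c > 0` such that for every
`δ > 0`,
`∫₀^{1/δ} t |𝓕(f)(t)| dt/|c(t)|²
   ≤ c (ω_{A,p}(f)(δ) δ^(-3/p) δ⁻¹ + ω_{A,p}(f)(δ) δ^(-2(α+1)/p) δ⁻¹)`. -/
theorem key_integral_estimate (S : JacobiHypergroup) (p : ℝ) (hp : 1 < p)
    (hp2 : p ≤ 2) (f : ℝ → ℂ) (hf : MemW S.A p f) :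
    ∃ c > (0 : ℝ), ∀ δ > (0 : ℝ),
      ∫⁻ t in Set.Ioo (0 : ℝ) (1 / δ),
          ENNReal.ofReal (t * ‖S.FT f t‖ * S.cden t)
        ≤ ENNReal.ofReal (c * (S.omega p f δ * δ ^ (-(3 / p)) * δ⁻¹ +
            S.omega p f δ * δ ^ (-(2 * (S.α + 1) / p)) * δ⁻¹)) := by
  classical
  have hp0 : (0:ℝ) < p := lt_trans one_pos hp
  set q : ℝ := p / (p - 1) with hq_def
  have hpq : p.HolderConjugate q := Real.HolderConjugate.conjExponent hp
  have hq0 : (0:ℝ) < q := hpq.symm.pos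
  have hone : 1 / p + 1 / q = 1 := by
    rw [one_div, one_div]; exact hpq.inv_add_inv_eq_one
  obtain ⟨C, hC, hHY⟩ := S.hHY p q hp hp2 hone
  have hcpos : ∀ t : ℝ, 0 < t → 0 < S.cden t := by
    intro t ht
    have habs : |t| = t := abs_of_pos ht
    have habs0 : 0 < |t| := abs_pos.mpr ht.ne'
    rcases le_or_gt t S.k with hle | hlt
    · have h1 := (S.hcden_lo t (by rw [habs]; exact hle)).1
      have h2 : 0 < S.k₁ * |t| ^ (2:ℝ) :=
        mul_pos S.hk₁ (Real.rpow_pos_of_pos habs0 _)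
      linarith
    · have h1 := (S.hcden_hi t (by rw [habs]; exact hlt)).1
      have h2 : 0 < S.k₁ * |t| ^ (2 * S.α + 1) :=
        mul_pos S.hk₁ (Real.rpow_pos_of_pos habs0 _)
      linarith
  have hA_nonneg : ∀ x ∈ Set.Ioi (0:ℝ), 0 ≤ S.A x := by
    intro x hx
    rw [S.hA x (le_of_lt hx)]
    have h1 : (0:ℝ) ≤ Real.sinh x := by
      rw [Real.sinh_nonneg_iff]; exact le_of_lt hx
    exact mul_nonneg (mul_nonneg (Real.rpow_nonneg (by norm_num) _)
      (Real.rpow_nonneg h1 _)) (Real.rpow_nonneg (Real.cosh_pos x).le _)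
  set e : ℝ := 2 * S.α + 1 - p with he_def
  set e' : ℝ := max e (-(1/2)) with he'_def
  have hee' : e ≤ e' := le_max_left _ _
  have he'1 : (-1:ℝ) < e' := lt_of_lt_of_le (by norm_num) (le_max_right _ _)
  have he'pos : (0:ℝ) < e' + 1 := by linarith
  set Ck : ℝ := max 1 (S.k ^ (e - e')) with hCk_def
  have hCk1 : (1:ℝ) ≤ Ck := le_max_left _ _
  have hCk0 : (0:ℝ) < Ck := lt_of_lt_of_le one_pos hCk1
  have h3p : (0:ℝ) < 2 - p + 1 := by linarith
  set a1 : ℝ := (S.k₂ / (2 - p + 1)) ^ (1/p) with ha1_def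
  set a2 : ℝ := (S.k₂ * Ck / (e' + 1)) ^ (1/p) with ha2_def
  have ha1 : 0 < a1 := Real.rpow_pos_of_pos (div_pos S.hk₂ h3p) _
  have ha2 : 0 < a2 := Real.rpow_pos_of_pos (div_pos (mul_pos S.hk₂ hCk0) he'pos) _
  set s1 : ℝ := -1 + 5 / (2 * p) with hs1_def
  have hs1 : 0 < s1 := by
    have h2p : (0:ℝ) < 2 * p := by linarith
    have h5 : (1:ℝ) < 5 / (2 * p) := (one_lt_div h2p).mpr (by linarith)
    rw [hs1_def]; linarith
  set s2 : ℝ := -1 + (2 * S.α + 3/2) / p with hs2_def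
  set K : ℝ := max (S.k⁻¹ ^ s1) (S.k⁻¹ ^ s2) with hK_def
  have hKs1 : S.k⁻¹ ^ s1 ≤ K := le_max_left _ _
  have hKs2 : S.k⁻¹ ^ s2 ≤ K := le_max_right _ _
  have hK0 : 0 ≤ K :=
    le_trans (Real.rpow_nonneg (inv_nonneg.mpr S.hk.le) _) hKs1
  refine ⟨S.c₀⁻¹ * C * (a1 + a2 * (1 + K)), ?_, ?_⟩
  · have hpos : 0 < a1 + a2 * (1 + K) := by nlinarith
    exact mul_pos (mul_pos (inv_pos.mpr S.hc₀) hC) hpos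
  intro δ hδ
  set g : ℝ → ℂ := fun y => S.τ δ f y - f y with hg_def
  have hgmem : MemW S.A p g := S.hτ_diff p hp.le δ f hf
  have homega : S.omega p f δ = wLpNorm S.A p g := rfl
  set ω : ℝ := S.omega p f δ with hω_def
  have hω0 : 0 ≤ ω := by
    rw [homega]
    unfold wLpNorm
    apply Real.rpow_nonneg
    exact setIntegral_nonneg measurableSet_Ioi fun x hx =>
      mul_nonneg (Real.rpow_nonneg (norm_nonneg _) _) (hA_nonneg x hx)
  have hδinv : (0:ℝ) < 1 / δ := by positivity
  -- pointwise bound coming from the lower bound on `|1 - φ_λ(δ)|`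
  have hFT_tau : ∀ᵐ lam ∂(volume.restrict (Set.Ioo (0:ℝ) (1/δ))),
      S.FT (S.τ δ f) lam = S.φ lam δ * S.FT f lam :=
    ae_restrict_of_ae_restrict_of_subset Set.Ioo_subset_Ioi_self
      (S.hτ_FT p hp.le hp2 δ f hf)
  have hptwise : ∀ᵐ t ∂(volume.restrict (Set.Ioo (0:ℝ) (1/δ))),
      ENNReal.ofReal (t * ‖S.FT f t‖ * S.cden t) ≤
        ENNReal.ofReal (S.c₀⁻¹ * (δ^2)⁻¹ *
          (t⁻¹ * (‖S.FT g t‖ * S.cden t))) := by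
    filter_upwards [hFT_tau, ae_restrict_mem measurableSet_Ioo] with t hφt ht
    obtain ⟨ht0, htδ⟩ := ht
    apply ENNReal.ofReal_le_ofReal
    have hcd : 0 < S.cden t := hcpos t ht0
    have htd : 0 < t * δ := mul_pos ht0 hδ
    have htd1 : t * δ < 1 := (lt_div_iff₀ hδ).mp htδ
    have hmin : min 1 ((t * δ)^2) = (t * δ)^2 := min_eq_right (by nlinarith)
    have hlow := S.hφ_lower t δ hδ
    rw [hmin, norm_sub_rev] at hlow
    have hFTg : S.FT g t = (S.φ t δ - 1) * S.FT f t := by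
      have h1 : S.FT g t = S.FT (S.τ δ f) t - S.FT f t := S.hFT_sub (S.τ δ f) f t
      rw [h1, hφt]; ring
    have h1 : S.c₀ * (t * δ)^2 * ‖S.FT f t‖ ≤ ‖S.FT g t‖ := by
      calc S.c₀ * (t * δ)^2 * ‖S.FT f t‖
          ≤ ‖S.φ t δ - 1‖ * ‖S.FT f t‖ :=
            mul_le_mul_of_nonneg_right hlow (norm_nonneg _)
        _ = ‖S.FT g t‖ := by rw [hFTg, norm_mul]
    have hden : (0:ℝ) < S.c₀ * δ^2 * t := mul_pos (mul_pos S.hc₀ (pow_pos hδ 2)) ht0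
    have h2 := mul_le_mul_of_nonneg_right h1 (div_nonneg hcd.le hden.le)
    calc t * ‖S.FT f t‖ * S.cden t
        = S.c₀ * (t * δ)^2 * ‖S.FT f t‖ * (S.cden t / (S.c₀ * δ^2 * t)) := by
          field_simp [S.hc₀.ne', hδ.ne', ht0.ne']
          try ring
      _ ≤ ‖S.FT g t‖ * (S.cden t / (S.c₀ * δ^2 * t)) := h2
      _ = S.c₀⁻¹ * (δ^2)⁻¹ * (t⁻¹ * (‖S.FT g t‖ * S.cden t)) := by
          field_simp [S.hc₀.ne', hδ.ne', ht0.ne']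
          try ring
  set Gf : ℝ → ENNReal := fun t => ENNReal.ofReal (t⁻¹ * S.cden t ^ (1/p)) with hGf_def
  set Ff : ℝ → ENNReal :=
    fun t => ENNReal.ofReal (‖S.FT g t‖ * S.cden t ^ (1/q)) with hFf_def
  have hG_m : Measurable Gf :=
    ENNReal.measurable_ofReal.comp (measurable_inv.mul
      ((Real.continuous_rpow_const hpq.one_div_nonneg).comp S.hcden_cont).measurable)
  have habs_m : Measurable fun t => ‖S.FT g t‖ := by
    exact (S.hFT_meas g).norm
  have hF_m : Measurable Ff :=
    ENNReal.measurable_ofReal.comp (habs_m.mul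
      ((Real.continuous_rpow_const hpq.symm.one_div_nonneg).comp S.hcden_cont).measurable)
  have hHold := ENNReal.lintegral_mul_le_Lp_mul_Lq
    (volume.restrict (Set.Ioo (0:ℝ) (1/δ))) hpq hG_m.aemeasurable hF_m.aemeasurable
  have hFpart : (∫⁻ t in Set.Ioo (0:ℝ) (1/δ), Ff t ^ q) ^ (1/q) ≤ ENNReal.ofReal (C * ω) := by
    have h1 : ∫⁻ t in Set.Ioo (0:ℝ) (1/δ), Ff t ^ q
        = ∫⁻ t in Set.Ioo (0:ℝ) (1/δ),
            ENNReal.ofReal (‖S.FT g t‖ ^ q * S.cden t) := by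
      refine setLIntegral_congr_fun measurableSet_Ioo ?_
      intro t ht
      have hcd : 0 < S.cden t := hcpos t ht.1
      simp only [hFf_def]
      rw [ENNReal.ofReal_rpow_of_nonneg
        (mul_nonneg (norm_nonneg _) (Real.rpow_nonneg hcd.le _)) hq0.le]
      congr 1
      rw [Real.mul_rpow (norm_nonneg _) (Real.rpow_nonneg hcd.le _),
        ← Real.rpow_mul hcd.le, one_div, inv_mul_cancel₀ hq0.ne', Real.rpow_one]
    rw [h1]
    calc (∫⁻ t in Set.Ioo (0:ℝ) (1/δ),
            ENNReal.ofReal (‖S.FT g t‖ ^ q * S.cden t)) ^ (1/q)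
        ≤ (∫⁻ t in Set.Ioi (0:ℝ),
            ENNReal.ofReal (‖S.FT g t‖ ^ q * S.cden t)) ^ (1/q) :=
          ENNReal.rpow_le_rpow
            (lintegral_mono' (Measure.restrict_mono Set.Ioo_subset_Ioi_self le_rfl) le_rfl)
            hpq.symm.one_div_nonneg
      _ ≤ ENNReal.ofReal (C * wLpNorm S.A p g) := hHY g hgmem
      _ = ENNReal.ofReal (C * ω) := by rw [homega]
  have hGpt : ∀ t ∈ Set.Ioo (0:ℝ) (1/δ),
      Gf t ^ p ≤ ENNReal.ofReal S.k₂ *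
        (ENNReal.ofReal (t ^ (2-p)) + ENNReal.ofReal Ck * ENNReal.ofReal (t ^ e')) := by
    intro t ht
    have ht0 := ht.1
    have hcd : 0 < S.cden t := hcpos t ht0
    have habs : |t| = t := abs_of_pos ht0
    have hGp : Gf t ^ p = ENNReal.ofReal (t ^ (-p) * S.cden t) := by
      simp only [hGf_def]
      rw [ENNReal.ofReal_rpow_of_nonneg
        (mul_nonneg (inv_nonneg.mpr ht0.le) (Real.rpow_nonneg hcd.le _)) hp0.le]
      congr 1
      rw [Real.mul_rpow (inv_nonneg.mpr ht0.le) (Real.rpow_nonneg hcd.le _),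
        ← Real.rpow_mul hcd.le, one_div, inv_mul_cancel₀ hp0.ne', Real.rpow_one,
        Real.inv_rpow ht0.le, ← Real.rpow_neg ht0.le]
    have hrhs : ENNReal.ofReal S.k₂ *
        (ENNReal.ofReal (t ^ (2-p)) + ENNReal.ofReal Ck * ENNReal.ofReal (t ^ e'))
        = ENNReal.ofReal (S.k₂ * (t^(2-p) + Ck * t^e')) := by
      rw [ENNReal.ofReal_mul S.hk₂.le,
        ENNReal.ofReal_add (Real.rpow_nonneg ht0.le _)
          (mul_nonneg hCk0.le (Real.rpow_nonneg ht0.le _)),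
        ENNReal.ofReal_mul hCk0.le]
    rw [hGp, hrhs]
    apply ENNReal.ofReal_le_ofReal
    rcases le_or_gt t S.k with hle | hlt
    · have hbd := (S.hcden_lo t (by rw [habs]; exact hle)).2
      rw [habs] at hbd
      have h2 : t ^ (-p) * S.cden t ≤ S.k₂ * t ^ (2-p) := by
        have hexp : -p + (2:ℝ) = 2 - p := by ring
        calc t ^ (-p) * S.cden t ≤ t ^ (-p) * (S.k₂ * t ^ (2:ℝ)) :=
              mul_le_mul_of_nonneg_left hbd (Real.rpow_nonneg ht0.le _)
          _ = S.k₂ * (t ^ (-p) * t ^ (2:ℝ)) := by ring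
          _ = S.k₂ * t ^ (2-p) := by rw [← Real.rpow_add ht0, hexp]
      have h3 : 0 ≤ Ck * t ^ e' := mul_nonneg hCk0.le (Real.rpow_nonneg ht0.le _)
      calc t ^ (-p) * S.cden t ≤ S.k₂ * t ^ (2-p) := h2
        _ ≤ S.k₂ * (t ^ (2-p) + Ck * t ^ e') :=
            mul_le_mul_of_nonneg_left (le_add_of_nonneg_right h3) S.hk₂.le
    · have hbd := (S.hcden_hi t (by rw [habs]; exact hlt)).2
      rw [habs] at hbd
      have hte : t ^ (-p) * S.cden t ≤ S.k₂ * t ^ e := by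
        have hexp : -p + (2*S.α+1) = e := by rw [he_def]; ring
        calc t ^ (-p) * S.cden t ≤ t ^ (-p) * (S.k₂ * t ^ (2*S.α+1)) :=
              mul_le_mul_of_nonneg_left hbd (Real.rpow_nonneg ht0.le _)
          _ = S.k₂ * (t ^ (-p) * t ^ (2*S.α+1)) := by ring
          _ = S.k₂ * t ^ e := by rw [← Real.rpow_add ht0, hexp]
      have h5 : t ^ (e - e') ≤ S.k ^ (e - e') :=
        Real.rpow_le_rpow_of_nonpos S.hk hlt.le (by simp only [sub_nonpos]; exact hee')
      have htee' : t ^ e ≤ Ck * t ^ e' := by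
        have h4 : t ^ e = t ^ e' * t ^ (e - e') := by
          rw [← Real.rpow_add ht0]; congr 1; ring
        have hmax : S.k ^ (e - e') ≤ Ck := by rw [hCk_def]; exact le_max_right _ _
        rw [h4]
        calc t ^ e' * t ^ (e - e') ≤ t ^ e' * S.k ^ (e - e') :=
              mul_le_mul_of_nonneg_left h5 (Real.rpow_nonneg ht0.le _)
          _ ≤ t ^ e' * Ck := mul_le_mul_of_nonneg_left hmax (Real.rpow_nonneg ht0.le _)
          _ = Ck * t ^ e' := mul_comm _ _
      have h6 : 0 ≤ t ^ (2-p) := Real.rpow_nonneg ht0.le _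
      calc t ^ (-p) * S.cden t ≤ S.k₂ * t ^ e := hte
        _ ≤ S.k₂ * (Ck * t ^ e') := mul_le_mul_of_nonneg_left htee' S.hk₂.le
        _ ≤ S.k₂ * (t ^ (2-p) + Ck * t ^ e') :=
            mul_le_mul_of_nonneg_left (le_add_of_nonneg_left h6) S.hk₂.le
  set X : ℝ := S.k₂ * ((1/δ) ^ (2-p+1) / (2-p+1)) with hX_def
  set Y : ℝ := S.k₂ * Ck * ((1/δ) ^ (e'+1) / (e'+1)) with hY_def
  have hX0 : 0 ≤ X := by
    rw [hX_def]
    exact mul_nonneg S.hk₂.le (div_nonneg (Real.rpow_nonneg hδinv.le _) h3p.le)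
  have hY0 : 0 ≤ Y := by
    rw [hY_def]
    exact mul_nonneg (mul_nonneg S.hk₂.le hCk0.le)
      (div_nonneg (Real.rpow_nonneg hδinv.le _) he'pos.le)
  have hGint : ∫⁻ t in Set.Ioo (0:ℝ) (1/δ), Gf t ^ p
      ≤ ENNReal.ofReal X + ENNReal.ofReal Y := by
    have hstep : ∫⁻ t in Set.Ioo (0:ℝ) (1/δ), Gf t ^ p
        ≤ ∫⁻ t in Set.Ioo (0:ℝ) (1/δ), ENNReal.ofReal S.k₂ *
            (ENNReal.ofReal (t ^ (2-p)) + ENNReal.ofReal Ck * ENNReal.ofReal (t ^ e')) := by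
      refine lintegral_mono_ae ?_
      filter_upwards [ae_restrict_mem measurableSet_Ioo] with t ht
      exact hGpt t ht
    refine le_trans hstep ?_
    have hm1 : Measurable fun t : ℝ => ENNReal.ofReal (t ^ (2-p)) :=
      ENNReal.measurable_ofReal.comp
        (Real.continuous_rpow_const (by linarith)).measurable
    rw [lintegral_const_mul' _ _ ENNReal.ofReal_ne_top, lintegral_add_left hm1,
      lintegral_const_mul' _ _ ENNReal.ofReal_ne_top,
      lint_rpow_Ioo hδinv (by linarith : (-1:ℝ) < 2 - p), lint_rpow_Ioo hδinv he'1]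
    have hXe : ENNReal.ofReal X
        = ENNReal.ofReal S.k₂ * ENNReal.ofReal ((1/δ) ^ (2-p+1) / (2-p+1)) := by
      rw [hX_def, ← ENNReal.ofReal_mul S.hk₂.le]
    have hYe : ENNReal.ofReal Y = ENNReal.ofReal S.k₂ *
        (ENNReal.ofReal Ck * ENNReal.ofReal ((1/δ) ^ (e'+1) / (e'+1))) := by
      rw [hY_def, mul_assoc, ← ENNReal.ofReal_mul hCk0.le, ← ENNReal.ofReal_mul S.hk₂.le]
    rw [hXe, hYe, ← mul_add]
  have h1p1 : 1/p ≤ 1 := by rw [div_le_one hp0]; linarith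
  have hGpart : (∫⁻ t in Set.Ioo (0:ℝ) (1/δ), Gf t ^ p) ^ (1/p)
      ≤ ENNReal.ofReal (X ^ (1/p) + Y ^ (1/p)) := by
    refine le_trans (ENNReal.rpow_le_rpow hGint hpq.one_div_nonneg) ?_
    refine le_trans (ENNReal.rpow_add_le_add_rpow _ _ hpq.one_div_nonneg h1p1) ?_
    rw [ENNReal.ofReal_rpow_of_nonneg hX0 hpq.one_div_nonneg,
      ENNReal.ofReal_rpow_of_nonneg hY0 hpq.one_div_nonneg,
      ENNReal.ofReal_add (Real.rpow_nonneg hX0 _) (Real.rpow_nonneg hY0 _)]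
  have hcc : (0:ℝ) ≤ S.c₀⁻¹ * (δ^2)⁻¹ :=
    mul_nonneg (inv_nonneg.mpr S.hc₀.le) (inv_nonneg.mpr (sq_nonneg δ))
  have hmain : (∫⁻ t in Set.Ioo (0:ℝ) (1/δ),
        ENNReal.ofReal (t * ‖S.FT f t‖ * S.cden t))
      ≤ ENNReal.ofReal (S.c₀⁻¹ * (δ^2)⁻¹ * ((X^(1/p) + Y^(1/p)) * (C * ω))) := by
    calc ∫⁻ t in Set.Ioo (0:ℝ) (1/δ),
            ENNReal.ofReal (t * ‖S.FT f t‖ * S.cden t)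
        ≤ ∫⁻ t in Set.Ioo (0:ℝ) (1/δ), ENNReal.ofReal (S.c₀⁻¹ * (δ^2)⁻¹ *
            (t⁻¹ * (‖S.FT g t‖ * S.cden t))) := lintegral_mono_ae hptwise
      _ = ∫⁻ t in Set.Ioo (0:ℝ) (1/δ),
            ENNReal.ofReal (S.c₀⁻¹ * (δ^2)⁻¹) * (Gf * Ff) t := by
          refine setLIntegral_congr_fun measurableSet_Ioo ?_
          intro t ht
          have ht0 := ht.1
          have hcd : 0 < S.cden t := hcpos t ht0
          beta_reduce
          rw [ENNReal.ofReal_mul hcc]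
          congr 1
          simp only [Pi.mul_apply, hGf_def, hFf_def]
          rw [← ENNReal.ofReal_mul
            (mul_nonneg (inv_nonneg.mpr ht0.le) (Real.rpow_nonneg hcd.le _))]
          congr 1
          have hsum : S.cden t ^ (1/p) * S.cden t ^ (1/q) = S.cden t := by
            rw [← Real.rpow_add hcd, hone, Real.rpow_one]
          calc t⁻¹ * (‖S.FT g t‖ * S.cden t)
              = t⁻¹ * (‖S.FT g t‖ *
                  (S.cden t ^ (1/p) * S.cden t ^ (1/q))) := by rw [hsum]
            _ = t⁻¹ * S.cden t ^ (1/p) *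
                  (‖S.FT g t‖ * S.cden t ^ (1/q)) := by ring
      _ = ENNReal.ofReal (S.c₀⁻¹ * (δ^2)⁻¹) *
            ∫⁻ t in Set.Ioo (0:ℝ) (1/δ), (Gf * Ff) t :=
          lintegral_const_mul' _ _ ENNReal.ofReal_ne_top
      _ ≤ ENNReal.ofReal (S.c₀⁻¹ * (δ^2)⁻¹) *
            ((∫⁻ t in Set.Ioo (0:ℝ) (1/δ), Gf t ^ p) ^ (1/p) *
             (∫⁻ t in Set.Ioo (0:ℝ) (1/δ), Ff t ^ q) ^ (1/q)) := mul_le_mul_right hHold _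
      _ ≤ ENNReal.ofReal (S.c₀⁻¹ * (δ^2)⁻¹) *
            (ENNReal.ofReal (X^(1/p) + Y^(1/p)) * ENNReal.ofReal (C * ω)) :=
          mul_le_mul_right (mul_le_mul' hGpart hFpart) _
      _ = ENNReal.ofReal (S.c₀⁻¹ * (δ^2)⁻¹ * ((X^(1/p) + Y^(1/p)) * (C * ω))) := by
          rw [← ENNReal.ofReal_mul
            (add_nonneg (Real.rpow_nonneg hX0 _) (Real.rpow_nonneg hY0 _)),
            ← ENNReal.ofReal_mul hcc]
  refine le_trans hmain (ENNReal.ofReal_le_ofReal ?_)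
  -- now a purely real inequality
  have hXv : X ^ (1/p) = a1 * δ ^ ((p-3) * (1/p)) := by
    have hXeq : X = S.k₂ / (2-p+1) * δ ^ (p-3) := by
      rw [hX_def, show (1:ℝ)/δ = δ⁻¹ from one_div δ, Real.inv_rpow hδ.le,
        ← Real.rpow_neg hδ.le, show -(2-p+1) = p - 3 by ring]
      ring
    rw [hXeq, Real.mul_rpow (div_nonneg S.hk₂.le h3p.le) (Real.rpow_nonneg hδ.le _),
      ← Real.rpow_mul hδ.le, ha1_def]
  have hYv : Y ^ (1/p) = a2 * δ ^ (-(e'+1) * (1/p)) := by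
    have hYeq : Y = S.k₂ * Ck / (e'+1) * δ ^ (-(e'+1)) := by
      rw [hY_def, show (1:ℝ)/δ = δ⁻¹ from one_div δ, Real.inv_rpow hδ.le,
        ← Real.rpow_neg hδ.le]
      ring
    rw [hYeq, Real.mul_rpow (div_nonneg (mul_nonneg S.hk₂.le hCk0.le) he'pos.le)
      (Real.rpow_nonneg hδ.le _), ← Real.rpow_mul hδ.le, ha2_def]
  have hpow2 : ((δ:ℝ)^2)⁻¹ = δ ^ (-2:ℝ) := by
    rw [show (-2:ℝ) = -((2:ℕ):ℝ) by norm_num, Real.rpow_neg hδ.le, Real.rpow_natCast]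
  have hδinv1 : δ⁻¹ = δ ^ (-1:ℝ) := (Real.rpow_neg_one δ).symm
  have hT1nn : 0 ≤ δ ^ (-(3/p)) * δ⁻¹ :=
    mul_nonneg (Real.rpow_nonneg hδ.le _) (inv_nonneg.mpr hδ.le)
  have hT2nn : 0 ≤ δ ^ (-(2*(S.α+1)/p)) * δ⁻¹ :=
    mul_nonneg (Real.rpow_nonneg hδ.le _) (inv_nonneg.mpr hδ.le)
  have hD1 : (δ^2)⁻¹ * δ ^ ((p-3)*(1/p)) = δ ^ (-(3/p)) * δ⁻¹ := by
    rw [hpow2, hδinv1, ← Real.rpow_add hδ, ← Real.rpow_add hδ]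
    congr 1
    field_simp
    ring
  have hcomb : (δ^2)⁻¹ * δ ^ (-(e'+1)*(1/p)) ≤
      (1+K) * (δ ^ (-(3/p)) * δ⁻¹ + δ ^ (-(2*(S.α+1)/p)) * δ⁻¹) := by
    by_cases hcase : (-(1/2) : ℝ) ≤ e
    · have he'eq : e' = 2*S.α+1-p := by rw [he'_def, max_eq_left hcase, he_def]
      have hId : (δ^2)⁻¹ * δ ^ (-(e'+1)*(1/p)) = δ ^ (-(2*(S.α+1)/p)) * δ⁻¹ := by
        rw [hpow2, hδinv1, ← Real.rpow_add hδ, ← Real.rpow_add hδ]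
        congr 1
        rw [he'eq]
        field_simp
        ring
      rw [hId]
      have hz : (1+K) * (δ ^ (-(3/p)) * δ⁻¹ + δ ^ (-(2*(S.α+1)/p)) * δ⁻¹)
          = δ ^ (-(2*(S.α+1)/p)) * δ⁻¹ + (δ ^ (-(3/p)) * δ⁻¹
              + K * (δ ^ (-(3/p)) * δ⁻¹ + δ ^ (-(2*(S.α+1)/p)) * δ⁻¹)) := by ring
      rw [hz]
      exact le_add_of_nonneg_right
        (add_nonneg hT1nn (mul_nonneg hK0 (add_nonneg hT1nn hT2nn)))
    · have he'eq : e' = -(1/2) := by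
        rw [he'_def, max_eq_right (le_of_lt (not_le.mp hcase))]
      rcases le_total δ S.k⁻¹ with hdk | hdk
      · have hId : (δ^2)⁻¹ * δ ^ (-(e'+1)*(1/p))
            = (δ ^ (-(3/p)) * δ⁻¹) * δ ^ s1 := by
          rw [hpow2, hδinv1, mul_assoc, ← Real.rpow_add hδ, ← Real.rpow_add hδ,
            ← Real.rpow_add hδ]
          congr 1
          rw [he'eq, hs1_def]
          field_simp
          ring
        rw [hId]
        have h7 : δ ^ s1 ≤ K := le_trans (Real.rpow_le_rpow hδ.le hdk hs1.le) hKs1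
        calc (δ ^ (-(3/p)) * δ⁻¹) * δ ^ s1 ≤ (δ ^ (-(3/p)) * δ⁻¹) * K :=
              mul_le_mul_of_nonneg_left h7 hT1nn
          _ ≤ (1+K) * (δ ^ (-(3/p)) * δ⁻¹ + δ ^ (-(2*(S.α+1)/p)) * δ⁻¹) := by
              have hz : (1+K) * (δ ^ (-(3/p)) * δ⁻¹ + δ ^ (-(2*(S.α+1)/p)) * δ⁻¹)
                  = (δ ^ (-(3/p)) * δ⁻¹) * K + (δ ^ (-(3/p)) * δ⁻¹
                      + (δ ^ (-(2*(S.α+1)/p)) * δ⁻¹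
                        + K * (δ ^ (-(2*(S.α+1)/p)) * δ⁻¹))) := by ring
              rw [hz]
              exact le_add_of_nonneg_right (add_nonneg hT1nn
                (add_nonneg hT2nn (mul_nonneg hK0 hT2nn)))
      · have hs2neg : s2 ≤ 0 := by
          have hlt2 : 2*S.α + 3/2 < p := by
            have hx : e < -(1/2) := not_le.mp hcase
            rw [he_def] at hx
            linarith
          have hd1 : (2*S.α + 3/2)/p < 1 := (div_lt_one hp0).mpr hlt2
          rw [hs2_def]
          linarith
        have hId : (δ^2)⁻¹ * δ ^ (-(e'+1)*(1/p))
            = (δ ^ (-(2*(S.α+1)/p)) * δ⁻¹) * δ ^ s2 := by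
          rw [hpow2, hδinv1, mul_assoc, ← Real.rpow_add hδ, ← Real.rpow_add hδ,
            ← Real.rpow_add hδ]
          congr 1
          rw [he'eq, hs2_def]
          field_simp
          ring
        rw [hId]
        have h7 : δ ^ s2 ≤ K :=
          le_trans (Real.rpow_le_rpow_of_nonpos (inv_pos.mpr S.hk) hdk hs2neg) hKs2
        calc (δ ^ (-(2*(S.α+1)/p)) * δ⁻¹) * δ ^ s2
            ≤ (δ ^ (-(2*(S.α+1)/p)) * δ⁻¹) * K :=
              mul_le_mul_of_nonneg_left h7 hT2nn
          _ ≤ (1+K) * (δ ^ (-(3/p)) * δ⁻¹ + δ ^ (-(2*(S.α+1)/p)) * δ⁻¹) := by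
              have hz : (1+K) * (δ ^ (-(3/p)) * δ⁻¹ + δ ^ (-(2*(S.α+1)/p)) * δ⁻¹)
                  = (δ ^ (-(2*(S.α+1)/p)) * δ⁻¹) * K + (δ ^ (-(2*(S.α+1)/p)) * δ⁻¹
                      + (δ ^ (-(3/p)) * δ⁻¹ + K * (δ ^ (-(3/p)) * δ⁻¹))) := by ring
              rw [hz]
              exact le_add_of_nonneg_right (add_nonneg hT2nn
                (add_nonneg hT1nn (mul_nonneg hK0 hT1nn)))
  rw [hXv, hYv]
  have hu0 : (0:ℝ) ≤ S.c₀⁻¹ * C * ω :=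
    mul_nonneg (mul_nonneg (inv_nonneg.mpr S.hc₀.le) hC.le) hω0
  calc S.c₀⁻¹ * (δ^2)⁻¹ * ((a1 * δ ^ ((p-3)*(1/p)) + a2 * δ ^ (-(e'+1)*(1/p))) * (C * ω))
      = (S.c₀⁻¹ * C * ω) * (a1 * ((δ^2)⁻¹ * δ ^ ((p-3)*(1/p)))
          + a2 * ((δ^2)⁻¹ * δ ^ (-(e'+1)*(1/p)))) := by ring
    _ ≤ (S.c₀⁻¹ * C * ω) * (a1 * (δ ^ (-(3/p)) * δ⁻¹)
          + a2 * ((1+K) * (δ ^ (-(3/p)) * δ⁻¹ + δ ^ (-(2*(S.α+1)/p)) * δ⁻¹))) := by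
        refine mul_le_mul_of_nonneg_left ?_ hu0
        rw [hD1]
        exact add_le_add le_rfl (mul_le_mul_of_nonneg_left hcomb ha2.le)
    _ ≤ S.c₀⁻¹ * C * (a1 + a2*(1+K)) *
          (ω * δ ^ (-(3/p)) * δ⁻¹ + ω * δ ^ (-(2*(S.α+1)/p)) * δ⁻¹) := by
        have hexp : S.c₀⁻¹ * C * (a1 + a2*(1+K)) *
              (ω * δ ^ (-(3/p)) * δ⁻¹ + ω * δ ^ (-(2*(S.α+1)/p)) * δ⁻¹)
            = (S.c₀⁻¹ * C * ω) * (a1 * (δ ^ (-(3/p)) * δ⁻¹)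
                + a2 * ((1+K) * (δ ^ (-(3/p)) * δ⁻¹ + δ ^ (-(2*(S.α+1)/p)) * δ⁻¹)))
              + (S.c₀⁻¹ * C * ω) * (a1 * (δ ^ (-(2*(S.α+1)/p)) * δ⁻¹)) := by ring
        rw [hexp]
        exact le_add_of_nonneg_right (mul_nonneg hu0 (mul_nonneg ha1.le hT2nn))
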